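/- Let f be a homeomorphism of the open unit disk 𝔻. If there exist a point z ∈ 𝔻 and an integer q ≥ 2 such that f^q(z) = z and f(z) ≠ z (i.e. z is a periodic point of f which is not a fixed point), then f is recurrent. (Claim established in the proof of Proposition 1.4.) -/

import Mathlib

open Set Filter Metric Topology

noncomputable section

/-- The open unit disk in the complex plane. -/
abbrev Disk : Set ℂ := Metric.ball 0 1

/-- The `k`-th iterate (`k ∈ ℤ`) of a homeomorphism of the open unit disk. -/
def fiter (f : ↥Disk ≃ₜ ↥Disk) (k : ℤ) : ↥Disk → ↥Disk := fun z => (f.toEquiv ^ k) z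

/-- A subset `X` of the disk is free for `f` if `f(X) ∩ X = ∅`. -/
def IsFreeSet (f : ↥Disk ≃ₜ ↥Disk) (X : Set ↥Disk) : Prop := (⇑f '' X) ∩ X = ∅

/-- An open disk: an open subset of `Disk` homeomorphic to `Disk`. -/
def IsOpenDisk (U : Set ↥Disk) : Prop := IsOpen U ∧ Nonempty (↥U ≃ₜ ↥Disk)

/-- `f` is recurrent: there is a closed chain of pairwise disjoint free open disks. -/
def RecurrentHomeo (f : ↥Disk ≃ₜ ↥Disk) : Prop :=
  ∃ r : ℕ, 1 ≤ r ∧ ∃ X : ZMod r → Set ↥Disk,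
    (∀ i, IsOpenDisk (X i)) ∧ (∀ i, IsFreeSet f (X i)) ∧
    (Pairwise fun i j => Disjoint (X i) (X j)) ∧
    (∀ i, ∃ k : ℤ, 1 ≤ k ∧ ((fiter f k '' X i) ∩ X (i + 1)).Nonempty)

/-- A small ball inside the disk, viewed as a subset of the subtype, is an open disk. -/
lemma isOpenDisk_preimage_ball (c : ℂ) (ε : ℝ) (hε : 0 < ε)
    (hsub : Metric.ball c ε ⊆ Disk) :
    IsOpenDisk ((Subtype.val : ↥Disk → ℂ) ⁻¹' Metric.ball c ε) := by
  constructor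
  · exact (Metric.isOpen_ball).preimage continuous_subtype_val
  · -- ↥(val ⁻¹' ball c ε) ≃ₜ ↥(ball c ε) ≃ₜ ↥(ball 0 1)
    have e1 : ↥((Subtype.val : ↥Disk → ℂ) ⁻¹' Metric.ball c ε) ≃ₜ ↥(Metric.ball c ε) :=
      { toFun := fun w => ⟨(w.1 : ℂ), w.2⟩
        invFun := fun b => ⟨⟨b.1, hsub b.2⟩, b.2⟩
        left_inv := fun w => rfl
        right_inv := fun b => rfl
        continuous_toFun := Continuous.subtype_mk
          (continuous_subtype_val.comp continuous_subtype_val) _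
        continuous_invFun := Continuous.subtype_mk
          (Continuous.subtype_mk continuous_subtype_val _) _ }
    have e2 : ↥(Metric.ball c ε) ≃ₜ ↥(Metric.ball (0:ℂ) 1) :=
      (OpenPartialHomeomorph.unitBallBall c ε hε).toHomeomorphSourceTarget.symm
    exact ⟨e1.trans e2⟩

theorem handel_periodic_recurrent (f : ↥Disk ≃ₜ ↥Disk) (z : ↥Disk)
    (q : ℤ) (hq : 2 ≤ q) (hper : fiter f q z = z) (hfix : f z ≠ z) :
    RecurrentHomeo f := by
  -- distance between f z and z
  set d : ℝ := dist ((f z : ℂ)) ((z : ℂ)) with hd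
  have hd0 : 0 < d := by
    rw [hd, dist_pos]
    exact fun h => hfix (Subtype.ext h)
  -- continuity of f at z : find δ > 0 s.t. dist (f w) (f z) < d/3 for dist w z < δ
  have hcont : Continuous fun w : ↥Disk => ((f w : ℂ)) :=
    continuous_subtype_val.comp f.continuous
  have htendsto : Filter.Tendsto (fun w : ↥Disk => ((f w : ℂ))) (𝓝 z) (𝓝 (f z : ℂ)) :=
    hcont.continuousAt
  have hball : ∀ᶠ w : ↥Disk in 𝓝 z, dist ((f w : ℂ)) ((f z : ℂ)) < d / 3 := by
    have : Metric.ball ((f z : ℂ)) (d / 3) ∈ 𝓝 ((f z : ℂ)) :=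
      Metric.ball_mem_nhds _ (by linarith)
    exact htendsto this
  rw [Metric.eventually_nhds_iff] at hball
  obtain ⟨δ, hδ0, hδ⟩ := hball
  -- radius for being inside the disk
  have hz1 : dist ((z : ℂ)) 0 < 1 := z.2
  set ε : ℝ := min (min δ (d / 3)) (1 - dist ((z : ℂ)) 0) with hε
  have hε0 : 0 < ε := by
    apply lt_min (lt_min hδ0 (by linarith)) (by linarith)
  have hεδ : ε ≤ δ := le_trans (min_le_left _ _) (min_le_left _ _)
  have hεd : ε ≤ d / 3 := le_trans (min_le_left _ _) (min_le_right _ _)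
  have hε1 : ε ≤ 1 - dist ((z : ℂ)) 0 := min_le_right _ _
  have hsub : Metric.ball ((z : ℂ)) ε ⊆ Disk := by
    intro x hx
    simp only [Metric.mem_ball] at hx ⊢
    calc dist x 0 ≤ dist x (z : ℂ) + dist ((z : ℂ)) 0 := dist_triangle _ _ _
      _ < ε + dist ((z : ℂ)) 0 := by linarith
      _ ≤ 1 := by linarith
  set U : Set ↥Disk := (Subtype.val : ↥Disk → ℂ) ⁻¹' Metric.ball ((z : ℂ)) ε with hU
  have hzU : z ∈ U := by
    simp [hU, Metric.mem_ball, hε0]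
  -- U is free
  have hfree : IsFreeSet f U := by
    rw [IsFreeSet, Set.eq_empty_iff_forall_notMem]
    rintro x ⟨⟨w, hwU, rfl⟩, hxU⟩
    have hw : dist ((w : ℂ)) ((z : ℂ)) < ε := hwU
    have h1 : dist ((f w : ℂ)) ((f z : ℂ)) < d / 3 := hδ (lt_of_lt_of_le hw hεδ)
    have h2 : dist ((f w : ℂ)) ((z : ℂ)) < ε := hxU
    have h3 : d ≤ dist ((f z : ℂ)) ((f w : ℂ)) + dist ((f w : ℂ)) ((z : ℂ)) :=
      dist_triangle _ _ _
    rw [dist_comm ((f z : ℂ))] at h3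
    linarith
  refine ⟨1, le_refl 1, fun _ => U, fun _ => isOpenDisk_preimage_ball _ _ hε0 hsub,
    fun _ => hfree, ?_, ?_⟩
  · intro i j hij
    exact absurd (Subsingleton.elim i j) hij
  · intro i
    refine ⟨q, by linarith, ?_⟩
    exact ⟨z, ⟨z, hzU, hper⟩, hzU⟩
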